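/- Theorem 2.2, lower part: Suppose the upper probability mass function p̄ satisfies Σ_{ω ∈ Ω} p̄(ω) ≥ 1 (i.e. the associated lower prevision avoids sure loss). Then for every subset A ⊆ Ω, the lower natural extension of the indicator of A equals E_{p̄}(A) = max{0, 1 − U(A^c)}, where A^c = Ω \ A. -/

import Mathlib

/-- The upper natural extension of a gamble `f` with respect to the upper
probability mass function `pbar`. -/
noncomputable def upperExt {Ω : Type*} [Fintype Ω] [DecidableEq Ω]
    (pbar f : Ω → ℝ) : ℝ :=
  sInf {β : ℝ | ∃ lam : Ω → ℝ, (∀ ω, 0 ≤ lam ω) ∧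
    ∀ ω' : Ω, ∑ ω : Ω, lam ω * (pbar ω - (if ω' = ω then (1 : ℝ) else 0)) ≤ β - f ω'}

/-- The lower natural extension, conjugate of the upper natural extension. -/
noncomputable def lowerExt {Ω : Type*} [Fintype Ω] [DecidableEq Ω]
    (pbar f : Ω → ℝ) : ℝ :=
  -(upperExt pbar (fun ω => -(f ω)))

/-- Auxiliary: for any probability mass function `q` dominated by `pbar`,
any feasible `β` satisfies `q(Aᶜ) - 1 ≤ β`. -/
private lemma aux_lb {Ω : Type*} [Fintype Ω] [DecidableEq Ω]
    (pbar lam q : Ω → ℝ) (A : Finset Ω) (β : ℝ)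
    (hlam : ∀ ω, 0 ≤ lam ω)
    (hq0 : ∀ ω, 0 ≤ q ω) (hqp : ∀ ω, q ω ≤ pbar ω)
    (hq1 : ∑ ω : Ω, q ω = 1)
    (hc : ∀ ω' : Ω, ∑ ω : Ω, lam ω * (pbar ω - (if ω' = ω then (1 : ℝ) else 0))
        ≤ β + (if ω' ∈ A then (1 : ℝ) else 0)) :
    (∑ ω ∈ Aᶜ, q ω) - 1 ≤ β := by
  classical
  set L := ∑ ω : Ω, lam ω * pbar ω with hL
  have hsum : ∀ ω' : Ω,
      ∑ ω : Ω, lam ω * (pbar ω - (if ω' = ω then (1 : ℝ) else 0)) = L - lam ω' := by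
    intro ω'
    simp [mul_sub, Finset.sum_sub_distrib, mul_ite, mul_one, mul_zero,
      Finset.sum_ite_eq, hL]
  have hc' : ∀ ω', L - lam ω' ≤ β + (if ω' ∈ A then (1 : ℝ) else 0) := by
    intro ω'; rw [← hsum ω']; exact hc ω'
  have key : ∑ ω' : Ω, q ω' * (L - lam ω')
      ≤ ∑ ω' : Ω, q ω' * (β + (if ω' ∈ A then (1 : ℝ) else 0)) :=
    Finset.sum_le_sum fun ω' _ => mul_le_mul_of_nonneg_left (hc' ω') (hq0 ω')
  have lhs : ∑ ω' : Ω, q ω' * (L - lam ω') = L - ∑ ω' : Ω, q ω' * lam ω' := by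
    simp [mul_sub, Finset.sum_sub_distrib, ← Finset.sum_mul, hq1]
  have rhs : ∑ ω' : Ω, q ω' * (β + (if ω' ∈ A then (1 : ℝ) else 0))
      = β + ∑ ω' ∈ A, q ω' := by
    simp only [mul_add, Finset.sum_add_distrib, mul_ite, mul_one, mul_zero]
    rw [← Finset.sum_mul, hq1, one_mul, Finset.sum_ite_mem, Finset.univ_inter]
  have hql : ∑ ω' : Ω, q ω' * lam ω' ≤ L := by
    rw [hL]
    apply Finset.sum_le_sum
    intro ω _
    have := mul_le_mul_of_nonneg_right (hqp ω) (hlam ω)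
    linarith [this]
  have hsplit : ∑ ω ∈ A, q ω + ∑ ω ∈ Aᶜ, q ω = 1 := by
    rw [Finset.sum_add_sum_compl, hq1]
  rw [lhs, rhs] at key
  linarith

/-- Theorem 2.2, lower part: `E(A) = max {0, 1 - U(Aᶜ)}`. -/
theorem lowerExt_indicator_eq
    {Ω : Type*} [Fintype Ω] [Nonempty Ω] [DecidableEq Ω]
    (pbar : Ω → ℝ) (hpbar : ∀ ω, 0 ≤ pbar ω ∧ pbar ω ≤ 1)
    (hasl : 1 ≤ ∑ ω : Ω, pbar ω) (A : Finset Ω) :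
    lowerExt pbar (fun ω => if ω ∈ A then (1 : ℝ) else 0) =
      max 0 (1 - ∑ ω ∈ Aᶜ, pbar ω) := by
  classical
  set Uc := ∑ ω ∈ Aᶜ, pbar ω with hUc
  have hUc0 : 0 ≤ Uc := Finset.sum_nonneg fun ω _ => (hpbar ω).1
  set S : Set ℝ := {β : ℝ | ∃ lam : Ω → ℝ, (∀ ω, 0 ≤ lam ω) ∧
    ∀ ω' : Ω, ∑ ω : Ω, lam ω * (pbar ω - (if ω' = ω then (1 : ℝ) else 0))
      ≤ β - (fun ω => -(if ω ∈ A then (1 : ℝ) else 0)) ω'} with hS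
  have hmem_iff : ∀ β : ℝ, β ∈ S ↔ ∃ lam : Ω → ℝ, (∀ ω, 0 ≤ lam ω) ∧
      ∀ ω' : Ω, ∑ ω : Ω, lam ω * (pbar ω - (if ω' = ω then (1 : ℝ) else 0))
        ≤ β + (if ω' ∈ A then (1 : ℝ) else 0) := by
    intro β
    simp [hS, sub_neg_eq_add]
  -- 0 ∈ S via lam = 0
  have h0S : (0 : ℝ) ∈ S := by
    rw [hmem_iff]
    refine ⟨fun _ => 0, fun _ => le_refl 0, fun ω' => ?_⟩
    simp only [zero_mul, Finset.sum_const_zero, zero_add]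
    split <;> norm_num
  -- Uc - 1 ∈ S via lam = indicator of Aᶜ
  have h1S : Uc - 1 ∈ S := by
    rw [hmem_iff]
    refine ⟨fun ω => if ω ∈ A then 0 else 1,
      fun ω => by by_cases h : ω ∈ A <;> simp [h],
      fun ω' => ?_⟩
    have step : ∑ ω : Ω, (if ω ∈ A then (0:ℝ) else 1) * (pbar ω - (if ω' = ω then (1:ℝ) else 0))
        = Uc - (if ω' ∈ Aᶜ then 1 else 0) := by
      calc ∑ ω : Ω, (if ω ∈ A then (0:ℝ) else 1) * (pbar ω - (if ω' = ω then (1:ℝ) else 0))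
          = ∑ ω : Ω, (if ω ∈ Aᶜ then (pbar ω - (if ω' = ω then (1:ℝ) else 0)) else 0) := by
            apply Finset.sum_congr rfl
            intro ω _
            by_cases h : ω ∈ A <;> simp [h, Finset.mem_compl]
        _ = ∑ ω ∈ Aᶜ, (pbar ω - (if ω' = ω then (1:ℝ) else 0)) := by
            rw [Finset.sum_ite_mem, Finset.univ_inter]
        _ = Uc - (if ω' ∈ Aᶜ then 1 else 0) := by
            rw [Finset.sum_sub_distrib, Finset.sum_ite_eq, hUc]
    rw [step]
    by_cases h : ω' ∈ A <;> simp [h, Finset.mem_compl]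
  -- lower bound
  have hlb : ∀ b ∈ S, min 0 (Uc - 1) ≤ b := by
    intro b hb
    rw [hmem_iff] at hb
    obtain ⟨lam, hlam, hc⟩ := hb
    by_cases h : 1 ≤ Uc
    · -- q supported on Aᶜ
      have hUcne : Uc ≠ 0 := by linarith
      set q : Ω → ℝ := fun ω => if ω ∈ A then 0 else pbar ω / Uc with hq
      have hq0 : ∀ ω, 0 ≤ q ω := by
        intro ω; rw [hq]; dsimp only
        split
        · exact le_refl 0
        · exact div_nonneg (hpbar ω).1 hUc0
      have hqp : ∀ ω, q ω ≤ pbar ω := by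
        intro ω; rw [hq]; dsimp only
        split
        · exact (hpbar ω).1
        · exact div_le_self (hpbar ω).1 h
      have hqc : ∑ ω ∈ Aᶜ, q ω = 1 := by
        have : ∀ ω ∈ Aᶜ, q ω = pbar ω / Uc := by
          intro ω hω; rw [hq]; dsimp only
          rw [if_neg (Finset.mem_compl.mp hω)]
        rw [Finset.sum_congr rfl this, ← Finset.sum_div, ← hUc, div_self hUcne]
      have hqA : ∑ ω ∈ A, q ω = 0 := by
        apply Finset.sum_eq_zero
        intro ω hω; rw [hq]; dsimp only; rw [if_pos hω]
      have hq1 : ∑ ω : Ω, q ω = 1 := by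
        rw [← Finset.sum_add_sum_compl A q, hqA, hqc]; ring
      have := aux_lb pbar lam q A b hlam hq0 hqp hq1 hc
      rw [hqc] at this
      have : (0:ℝ) ≤ b := by linarith
      exact le_trans (min_le_left _ _) this
    · -- Uc < 1, q = pbar on Aᶜ, scaled pbar on A
      push_neg at h
      set UA := ∑ ω ∈ A, pbar ω with hUA
      have hsplit : UA + Uc = ∑ ω : Ω, pbar ω := Finset.sum_add_sum_compl A pbar
      have hUApos : 0 < UA := by linarith
      set c : ℝ := (1 - Uc) / UA with hcdef
      have hc0 : 0 ≤ c := div_nonneg (by linarith) hUApos.le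
      have hc1 : c ≤ 1 := by
        rw [hcdef, div_le_one hUApos]; linarith
      set q : Ω → ℝ := fun ω => if ω ∈ A then pbar ω * c else pbar ω with hq
      have hq0 : ∀ ω, 0 ≤ q ω := by
        intro ω; rw [hq]; dsimp only
        split
        · exact mul_nonneg (hpbar ω).1 hc0
        · exact (hpbar ω).1
      have hqp : ∀ ω, q ω ≤ pbar ω := by
        intro ω; rw [hq]; dsimp only
        split
        · exact mul_le_of_le_one_right (hpbar ω).1 hc1
        · exact le_refl _
      have hqc : ∑ ω ∈ Aᶜ, q ω = Uc := by
        rw [hUc]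
        apply Finset.sum_congr rfl
        intro ω hω; rw [hq]; dsimp only; rw [if_neg (Finset.mem_compl.mp hω)]
      have hqA : ∑ ω ∈ A, q ω = 1 - Uc := by
        have : ∀ ω ∈ A, q ω = pbar ω * c := by
          intro ω hω; rw [hq]; dsimp only; rw [if_pos hω]
        rw [Finset.sum_congr rfl this, ← Finset.sum_mul, ← hUA, hcdef,
          mul_div_cancel₀ _ hUApos.ne']
      have hq1 : ∑ ω : Ω, q ω = 1 := by
        rw [← Finset.sum_add_sum_compl A q, hqA, hqc]; ring
      have := aux_lb pbar lam q A b hlam hq0 hqp hq1 hc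
      rw [hqc] at this
      exact le_trans (min_le_right _ _) this
  have hinf : sInf S = min 0 (Uc - 1) := by
    apply le_antisymm
    · rcases min_cases (0:ℝ) (Uc - 1) with ⟨hm, _⟩ | ⟨hm, _⟩
      · rw [hm]; exact csInf_le ⟨min 0 (Uc - 1), hlb⟩ h0S
      · rw [hm]; exact csInf_le ⟨min 0 (Uc - 1), hlb⟩ h1S
    · exact le_csInf ⟨0, h0S⟩ hlb
  have : lowerExt pbar (fun ω => if ω ∈ A then (1 : ℝ) else 0) = -(sInf S) := by
    rw [lowerExt, upperExt]
  rw [this, hinf]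
  rcases le_total (Uc - 1) 0 with h | h
  · rw [min_eq_right h, max_eq_right (by linarith)]; ring
  · rw [min_eq_left h, max_eq_left (by linarith)]; ring
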